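/- The unit group of the Hurwitz order 𝒟 = ℤ[1, I, J, (1+I+J+IJ)/2] in Hamilton's rational quaternion algebra consists of exactly the 24 elements {±1, ±I, ±J, ±IJ, (±1 ± I ± J ± IJ)/2}, i.e. the elements of 𝒟 of reduced norm 1. -/

import Mathlib

/-- Membership in the Hurwitz order: all coordinates in `ℤ` or all in `ℤ + 1/2`. -/
def InHurwitz (q : Quaternion ℚ) : Prop :=
  (∃ a b c d : ℤ, q = (⟨(a : ℚ), (b : ℚ), (c : ℚ), (d : ℚ)⟩ : Quaternion ℚ)) ∨
  (∃ a b c d : ℤ, q = (⟨(a : ℚ) + 1/2, (b : ℚ) + 1/2, (c : ℚ) + 1/2, (d : ℚ) + 1/2⟩ :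
      Quaternion ℚ))

/-- The 24 elements `±1, ±I, ±J, ±IJ, (±1 ± I ± J ± IJ)/2`. -/
def hurwitzUnits : Set (Quaternion ℚ) :=
  {q | (∃ e : ℚ, (e = 1 ∨ e = -1) ∧
        (q = (⟨e, 0, 0, 0⟩ : Quaternion ℚ) ∨ q = (⟨0, e, 0, 0⟩ : Quaternion ℚ) ∨
         q = (⟨0, 0, e, 0⟩ : Quaternion ℚ) ∨ q = (⟨0, 0, 0, e⟩ : Quaternion ℚ))) ∨
      (∃ a b c d : ℚ, (a = 1/2 ∨ a = -1/2) ∧ (b = 1/2 ∨ b = -1/2) ∧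
        (c = 1/2 ∨ c = -1/2) ∧ (d = 1/2 ∨ d = -1/2) ∧
        q = (⟨a, b, c, d⟩ : Quaternion ℚ))}

lemma nsq_mk (a b c d : ℚ) : Quaternion.normSq (⟨a, b, c, d⟩ : Quaternion ℚ) =
    a ^ 2 + b ^ 2 + c ^ 2 + d ^ 2 := Quaternion.normSq_def' _

lemma star_mk' (a b c d : ℚ) : @star (Quaternion ℚ) _ ⟨a, b, c, d⟩ =
    (⟨a, -b, -c, -d⟩ : Quaternion ℚ) :=
  (QuaternionAlgebra.star_mk (c₁ := -1) (c₂ := 0) (c₃ := -1) a b c d).trans (by simp)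

lemma qext_iff (a b c d a' b' c' d' : ℚ) :
    @Eq (Quaternion ℚ) ⟨a, b, c, d⟩ ⟨a', b', c', d'⟩ ↔ a = a' ∧ b = b' ∧ c = c' ∧ d = d' :=
  QuaternionAlgebra.mk.injEq _ _ _ _ _ _ _ _ ▸ Iff.rfl

open Quaternion in
lemma hu_normSq {γ : Quaternion ℚ} (h : γ ∈ hurwitzUnits) : Quaternion.normSq γ = 1 := by
  rcases h with ⟨e, he, h⟩ | ⟨a, b, c, d, ha, hb, hc, hd, rfl⟩
  · rcases he with rfl | rfl <;> rcases h with rfl | rfl | rfl | rfl <;>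
      simp [nsq_mk] <;> norm_num
  · rcases ha with rfl | rfl <;> rcases hb with rfl | rfl <;> rcases hc with rfl | rfl <;>
      rcases hd with rfl | rfl <;> simp [nsq_mk] <;> norm_num

lemma norm_one_mem {γ : Quaternion ℚ} (h : InHurwitz γ) (hn : Quaternion.normSq γ = 1) :
    γ ∈ hurwitzUnits := by
  rcases h with ⟨a, b, c, d, rfl⟩ | ⟨a, b, c, d, rfl⟩
  · rw [nsq_mk] at hn
    have hz : a ^ 2 + b ^ 2 + c ^ 2 + d ^ 2 = 1 := by exact_mod_cast hn
    have h1 : -1 ≤ a ∧ a ≤ 1 := by constructor <;> nlinarith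
    have h2 : -1 ≤ b ∧ b ≤ 1 := by constructor <;> nlinarith
    have h3 : -1 ≤ c ∧ c ≤ 1 := by constructor <;> nlinarith
    have h4 : -1 ≤ d ∧ d ≤ 1 := by constructor <;> nlinarith
    obtain ⟨h1a, h1b⟩ := h1; obtain ⟨h2a, h2b⟩ := h2
    obtain ⟨h3a, h3b⟩ := h3; obtain ⟨h4a, h4b⟩ := h4
    interval_cases a <;> interval_cases b <;> interval_cases c <;> interval_cases d <;>
      first
        | (exfalso; omega)
        | (refine Or.inl ⟨1, Or.inl rfl, Or.inl ?_⟩; norm_num [qext_iff]; done)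
        | (refine Or.inl ⟨-1, Or.inr rfl, Or.inl ?_⟩; norm_num [qext_iff]; done)
        | (refine Or.inl ⟨1, Or.inl rfl, Or.inr (Or.inl ?_)⟩; norm_num [qext_iff]; done)
        | (refine Or.inl ⟨-1, Or.inr rfl, Or.inr (Or.inl ?_)⟩; norm_num [qext_iff]; done)
        | (refine Or.inl ⟨1, Or.inl rfl, Or.inr (Or.inr (Or.inl ?_))⟩; norm_num [qext_iff]; done)
        | (refine Or.inl ⟨-1, Or.inr rfl, Or.inr (Or.inr (Or.inl ?_))⟩; norm_num [qext_iff]; done)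
        | (refine Or.inl ⟨1, Or.inl rfl, Or.inr (Or.inr (Or.inr ?_))⟩; norm_num [qext_iff]; done)
        | (refine Or.inl ⟨-1, Or.inr rfl, Or.inr (Or.inr (Or.inr ?_))⟩; norm_num [qext_iff]; done)
  · rw [nsq_mk] at hn
    have hz : (2 * a + 1) ^ 2 + (2 * b + 1) ^ 2 + (2 * c + 1) ^ 2 + (2 * d + 1) ^ 2 = 4 := by
      have : ((2 * a + 1 : ℤ) : ℚ) ^ 2 + ((2 * b + 1 : ℤ) : ℚ) ^ 2 +
          ((2 * c + 1 : ℤ) : ℚ) ^ 2 + ((2 * d + 1 : ℤ) : ℚ) ^ 2 = 4 := by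
        push_cast
        nlinarith [hn]
      exact_mod_cast this
    have h1 : -1 ≤ a ∧ a ≤ 0 := by constructor <;> nlinarith
    have h2 : -1 ≤ b ∧ b ≤ 0 := by constructor <;> nlinarith
    have h3 : -1 ≤ c ∧ c ≤ 0 := by constructor <;> nlinarith
    have h4 : -1 ≤ d ∧ d ≤ 0 := by constructor <;> nlinarith
    obtain ⟨h1a, h1b⟩ := h1; obtain ⟨h2a, h2b⟩ := h2
    obtain ⟨h3a, h3b⟩ := h3; obtain ⟨h4a, h4b⟩ := h4
    refine Or.inr ⟨(a : ℚ) + 1/2, (b : ℚ) + 1/2, (c : ℚ) + 1/2, (d : ℚ) + 1/2,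
      ?_, ?_, ?_, ?_, rfl⟩ <;>
      [interval_cases a; interval_cases b; interval_cases c; interval_cases d] <;> norm_num

lemma star_hurwitz {γ : Quaternion ℚ} (h : InHurwitz γ) : InHurwitz (star γ) := by
  rcases h with ⟨a, b, c, d, rfl⟩ | ⟨a, b, c, d, rfl⟩
  · exact Or.inl ⟨a, -b, -c, -d, by rw [star_mk']; push_cast; rfl⟩
  · refine Or.inr ⟨a, -1 - b, -1 - c, -1 - d, ?_⟩
    rw [star_mk']
    push_cast
    congr 1 <;> ring

lemma hurwitz_normSq_int {γ : Quaternion ℚ} (h : InHurwitz γ) :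
    ∃ n : ℤ, (n : ℚ) = Quaternion.normSq γ := by
  rcases h with ⟨a, b, c, d, rfl⟩ | ⟨a, b, c, d, rfl⟩
  · exact ⟨a ^ 2 + b ^ 2 + c ^ 2 + d ^ 2, by rw [nsq_mk]; push_cast; ring⟩
  · exact ⟨a ^ 2 + a + b ^ 2 + b + c ^ 2 + c + d ^ 2 + d + 1,
      by rw [nsq_mk]; push_cast; ring⟩

theorem hurwitz_unit_group (γ : Quaternion ℚ) (hγ : InHurwitz γ) :
    ((∃ δ, InHurwitz δ ∧ γ * δ = 1 ∧ δ * γ = 1) ↔ γ ∈ hurwitzUnits) ∧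
    (γ ∈ hurwitzUnits ↔ Quaternion.normSq γ = 1) := by
  constructor
  · constructor
    · rintro ⟨δ, hδ, h1, -⟩
      apply norm_one_mem hγ
      have hmul : Quaternion.normSq γ * Quaternion.normSq δ = 1 := by
        rw [← map_mul, h1, map_one]
      obtain ⟨m, hm⟩ := hurwitz_normSq_int hγ
      obtain ⟨n, hn⟩ := hurwitz_normSq_int hδ
      have hmn : m * n = 1 := by
        have : ((m * n : ℤ) : ℚ) = 1 := by push_cast; rw [hm, hn]; exact hmul
        exact_mod_cast this
      have hm0 : 0 ≤ m := by
        have := Quaternion.normSq_nonneg (a := γ)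
        rw [← hm] at this; exact_mod_cast this
      have : m = 1 := by
        have := Int.isUnit_iff.mp (IsUnit.of_mul_eq_one (a := m) n hmn)
        omega
      rw [← hm, this]; norm_num
    · intro h
      refine ⟨star γ, star_hurwitz hγ, ?_, ?_⟩
      · rw [Quaternion.self_mul_star, hu_normSq h]; norm_num
      · rw [Quaternion.star_mul_self, hu_normSq h]; norm_num
  · exact ⟨hu_normSq, norm_one_mem hγ⟩
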